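/- Upper bound direction of the split formula: for any common sublist C of A and B with P as an infix (C = α ++ P ++ γ), there exist indices i ≤ i' in A and j ≤ j' in B such that P appears in A spanning i..i' and in B spanning j..j', |α| ≤ LLCS(A[1..i-1], B[1..j-1]), and |γ| ≤ LLCS(A[i'+1..n], B[j'+1..m]); hence |C| ≤ LLCS(A[1..i-1], B[1..j-1]) + r + LLCS(A[i'+1..n], B[j'+1..m]). -/

import Mathlib

/-- Maximum length of a common sublist (LCS length) of `X` and `Y`. -/
def LLCS {σ : Type} [DecidableEq σ] (X Y : List σ) : ℕ :=
  ((X.sublists.filter (fun C => decide (C.Sublist Y))).map List.length).foldr max 0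

/-- `I` is an appearance (embedding witness) of `P` in `A`: a strictly increasing
list of (0-based) indices realizing `P` as a sublist of `A`. -/
def IsApp {σ : Type} (A P : List σ) (I : List ℕ) : Prop :=
  I.Chain' (· < ·) ∧ I.length = P.length ∧ ∀ t, t < I.length → A[I.getD t 0]? = P[t]?

/-- A greedy (compact) appearance: each next index is the least possible one. -/
def IsGreedy {σ : Type} (A P : List σ) (I : List ℕ) : Prop :=
  IsApp A P I ∧ ∀ t, t + 1 < I.length → ∀ k, I.getD t 0 < k → A[k]? = P[t+1]? →
    I.getD (t+1) 0 ≤ k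

lemma le_foldr_max {a : ℕ} {l : List ℕ} (h : a ∈ l) : a ≤ l.foldr max 0 := by
  induction l with
  | nil => cases h
  | cons x xs ih =>
    rcases List.mem_cons.1 h with rfl | h
    · exact le_max_left _ _
    · exact le_trans (ih h) (le_max_right _ _)

lemma le_LLCS {σ : Type} [DecidableEq σ] {C X Y : List σ}
    (h1 : C.Sublist X) (h2 : C.Sublist Y) : C.length ≤ LLCS X Y := by
  apply le_foldr_max
  apply List.mem_map.2
  refine ⟨C, ?_, rfl⟩
  rw [List.mem_filter]
  exact ⟨List.mem_sublists.2 h1, by simpa using h2⟩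

lemma getD_map_add (c : ℕ) (I : List ℕ) (t : ℕ) (ht : t < I.length) :
    (I.map (· + c)).getD t 0 = I.getD t 0 + c := by
  rw [List.getD_eq_getElem?_getD, List.getD_eq_getElem?_getD,
    List.getElem?_map, List.getElem?_eq_getElem ht]
  simp

/-- shift an appearance in the middle segment to the whole list -/
lemma isApp_shift {σ : Type} (pre A2 suf P : List σ) (I : List ℕ)
    (h : IsApp A2 P I) (hb : ∀ k ∈ I, k < A2.length) :
    IsApp (pre ++ A2 ++ suf) P (I.map (· + pre.length)) := by
  obtain ⟨hc, hl, hg⟩ := h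
  refine ⟨?_, by simpa using hl, ?_⟩
  · rw [List.Chain', List.isChain_map]
    exact List.IsChain.imp (fun _ _ h => by omega) hc
  · intro t ht
    rw [List.length_map] at ht
    rw [getD_map_add _ _ _ ht]
    have hk : I.getD t 0 < A2.length := by
      apply hb
      rw [List.getD_eq_getElem?_getD, List.getElem?_eq_getElem ht]
      exact List.getElem_mem ..
    rw [List.append_assoc, List.getElem?_append_right (by omega), Nat.add_sub_cancel,
      List.getElem?_append_left hk]
    exact hg t ht

lemma exists_app {σ : Type} : ∀ (P A : List σ), P.Sublist A →
    ∃ I : List ℕ, IsApp A P I ∧ ∀ k ∈ I, k < A.length := by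
  intro P A h
  induction h with
  | slnil => exact ⟨[], ⟨List.isChain_nil, rfl, by simp⟩, by simp⟩
  | @cons l₁ l₂ a _ ih =>
    obtain ⟨I, hI, hb⟩ := ih
    refine ⟨I.map (· + 1), ?_, ?_⟩
    · have := isApp_shift [a] l₂ [] l₁ I hI hb
      simpa using this
    · intro k hk
      obtain ⟨x, hx, rfl⟩ := List.mem_map.1 hk
      have := hb x hx
      simp; omega
  | @cons_cons l₁ l₂ a _ ih =>
    obtain ⟨I, hI, hb⟩ := ih
    obtain ⟨hc, hl, hg⟩ := hI
    refine ⟨0 :: I.map (· + 1), ⟨?_, by simpa using hl, ?_⟩, ?_⟩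
    · rw [List.Chain', List.isChain_cons]
      constructor
      · intro b hb'
        have := List.mem_of_mem_head? hb'
        obtain ⟨x, _, rfl⟩ := List.mem_map.1 this
        omega
      · rw [List.isChain_map]
        exact List.IsChain.imp (fun _ _ h => by omega) hc
    · intro t ht
      cases t with
      | zero => simp
      | succ t =>
        simp only [List.length_cons, List.length_map] at ht
        have ht' : t < I.length := by omega
        show (a :: l₂)[(I.map (· + 1)).getD t 0]? = _
        rw [getD_map_add _ _ _ ht']
        simpa using hg t ht'
    · intro k hk
      rcases List.mem_cons.1 hk with rfl | hk
      · simp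
      · obtain ⟨x, hx, rfl⟩ := List.mem_map.1 hk
        have := hb x hx
        simp; omega

lemma key {σ : Type} [DecidableEq σ] (A al P ga : List σ) (hP : P ≠ [])
    (h : (al ++ P ++ ga).Sublist A) :
    ∃ i i' : ℕ, i ≤ i' ∧
      (∃ I : List ℕ, IsApp A P I ∧ I.head? = some i ∧ I.getLast? = some i') ∧
      al.Sublist (A.take i) ∧ ga.Sublist (A.drop (i' + 1)) := by
  rw [List.append_assoc] at h
  obtain ⟨A1, A4, rfl, hal, h2⟩ := List.append_sublist_iff.1 h
  obtain ⟨A2, A3, rfl, hPA2, hga⟩ := List.append_sublist_iff.1 h2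
  obtain ⟨I0, hI0, hb0⟩ := exists_app P A2 hPA2
  set I := I0.map (· + A1.length) with hIdef
  have hI : IsApp (A1 ++ (A2 ++ A3)) P I := by
    have := isApp_shift A1 A2 A3 P I0 hI0 hb0
    rwa [List.append_assoc] at this
  have hIne : I ≠ [] := by
    have : I.length = P.length := hI.2.1
    intro hnil; rw [hnil] at this; exact hP (List.length_eq_zero_iff.1 this.symm)
  have hbnd : ∀ k ∈ I, A1.length ≤ k ∧ k < A1.length + A2.length := by
    intro k hk
    obtain ⟨x, hx, rfl⟩ := List.mem_map.1 hk
    have := hb0 x hx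
    omega
  clear_value I
  obtain ⟨i, tl, rfl⟩ : ∃ i tl, I = i :: tl := by
    cases I with
    | nil => exact absurd rfl hIne
    | cons a b => exact ⟨a, b, rfl⟩
  set i' := (i :: tl).getLast (by simp) with hi'def
  have hi'mem : i' ∈ i :: tl := List.getLast_mem _
  have hii' : i ≤ i' := by
    have hpw := List.isChain_iff_pairwise.1 hI.1
    rcases List.mem_cons.1 hi'mem with h | h
    · omega
    · exact le_of_lt ((List.pairwise_cons.1 hpw).1 _ h)
  refine ⟨i, i', hii', ⟨i :: tl, hI, rfl, List.getLast?_eq_getLast _⟩, ?_, ?_⟩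
  · -- al ≤ take i
    have hi1 : A1.length ≤ i := (hbnd i (by simp)).1
    have : (A1 ++ (A2 ++ A3)).take i = A1 ++ (A2 ++ A3).take (i - A1.length) := by
      rw [List.take_append, List.take_of_length_le hi1]
    rw [this]
    exact hal.trans (List.sublist_append_left _ _)
  · -- ga ≤ drop (i'+1)
    have hi2 : i' + 1 ≤ A1.length + A2.length := (hbnd i' hi'mem).2
    have : (A1 ++ (A2 ++ A3)).drop (i' + 1)
        = (A1 ++ A2).drop (i' + 1) ++ A3 := by
      rw [← List.append_assoc, List.drop_append,
        Nat.sub_eq_zero_of_le (by simpa using hi2), List.drop_zero]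
    rw [this]
    exact hga.trans (List.sublist_append_right _ _)

theorem stmt13 {σ : Type} [DecidableEq σ] (A B P C al ga : List σ) (hP : P ≠ [])
    (hC : C = al ++ P ++ ga) (hA : C.Sublist A) (hB : C.Sublist B) :
    ∃ i i' j j' : ℕ, i ≤ i' ∧ j ≤ j' ∧
      (∃ I : List ℕ, IsApp A P I ∧ I.head? = some i ∧ I.getLast? = some i') ∧
      (∃ J : List ℕ, IsApp B P J ∧ J.head? = some j ∧ J.getLast? = some j') ∧
      al.length ≤ LLCS (A.take i) (B.take j) ∧
      ga.length ≤ LLCS (A.drop (i' + 1)) (B.drop (j' + 1)) ∧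
      C.length ≤ LLCS (A.take i) (B.take j) + P.length +
        LLCS (A.drop (i' + 1)) (B.drop (j' + 1)) := by
  subst hC
  obtain ⟨i, i', hii, hIA, halA, hgaA⟩ := key A al P ga hP hA
  obtain ⟨j, j', hjj, hJB, halB, hgaB⟩ := key B al P ga hP hB
  have h1 : al.length ≤ LLCS (A.take i) (B.take j) := le_LLCS halA halB
  have h2 : ga.length ≤ LLCS (A.drop (i' + 1)) (B.drop (j' + 1)) := le_LLCS hgaA hgaB
  refine ⟨i, i', j, j', hii, hjj, hIA, hJB, h1, h2, ?_⟩
  simp only [List.length_append]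
  omega
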